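/- Suppose e = {P, Q} and e′ = {P′, Q′} are edges with arc(e) = arc(e′) = α, where P, P′ ∈ ∂𝒫_α (α removable) and Q = P \ {α}, Q′ = P′ \ {α}. If there is a path P = P₀, P₁, …, P_n = P′ inside ∂𝒫_α (each Pᵢ contains α, α is removable from each, consecutive sets differ by one element ≠ α), then setting Qᵢ = Pᵢ \ {α}, each quadruple Pᵢ, Pᵢ₊₁, Qᵢ₊₁, Qᵢ is an embedded 4-cycle (square), and hence e and e′ are parallel (lie in the same hyperplane). -/
import Mathlib


variable {A : Type*} [DecidableEq A]

/-- An embedded 4-cycle (square) in the graph on a collection `Pols` of finite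
sets whose edges join sets with symmetric difference one. -/
def IsSquareIn (Pols : Set (Finset A)) (a b c d : Finset A) : Prop :=
  a ∈ Pols ∧ b ∈ Pols ∧ c ∈ Pols ∧ d ∈ Pols ∧
  a ≠ b ∧ a ≠ c ∧ a ≠ d ∧ b ≠ c ∧ b ≠ d ∧ c ≠ d ∧
  (symmDiff a b).card = 1 ∧ (symmDiff b c).card = 1 ∧
  (symmDiff c d).card = 1 ∧ (symmDiff d a).card = 1

/-- Two (oriented) edges are opposite sides of a square: `(a, d)` and `(b, c)`
for some square `a b c d`. -/
def OppEdges (Pols : Set (Finset A)) (e f : Finset A × Finset A) : Prop :=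
  ∃ a b c d : Finset A, IsSquareIn Pols a b c d ∧ e = (a, d) ∧ f = (b, c)

lemma symmDiff_erase_self {a : Finset A} {α : A} (h : α ∈ a) :
    symmDiff a (a.erase α) = {α} := by
  ext x
  simp only [Finset.mem_symmDiff, Finset.mem_erase, Finset.mem_singleton]
  constructor
  · rintro (⟨hx, h2⟩ | ⟨⟨hne, hx⟩, h2⟩)
    · by_contra hne; exact h2 ⟨hne, hx⟩
    · exact absurd hx h2
  · rintro rfl; exact Or.inl ⟨h, fun h2 => h2.1 rfl⟩

lemma symmDiff_erase_erase (a b : Finset A) (α : A) :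
    symmDiff (a.erase α) (b.erase α) = (symmDiff a b).erase α := by
  ext x
  simp only [Finset.mem_symmDiff, Finset.mem_erase]
  tauto

/-- If `P₀, …, Pₙ` is a path inside `∂Pols_α` (each `Pᵢ` contains `α`, `α` is
removable from each, and consecutive sets differ by one element other than
`α`), then each quadruple `Pᵢ, Pᵢ₊₁, Pᵢ₊₁ \ {α}, Pᵢ \ {α}` is an embedded
4-cycle, and hence the edges `{P₀, P₀ \ {α}}` and `{Pₙ, Pₙ \ {α}}` are parallel
(lie in the same hyperplane). -/
theorem path_in_boundary_gives_parallel (Pols : Set (Finset A)) (α : A)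
    (n : ℕ) (P : Fin (n + 1) → Finset A)
    (hmem : ∀ i, P i ∈ Pols)
    (hα : ∀ i, α ∈ P i)
    (hrem : ∀ i, (P i).erase α ∈ Pols)
    (hadj : ∀ i : Fin n, (symmDiff (P i.castSucc) (P i.succ)).card = 1)
    (hnotα : ∀ i : Fin n, α ∉ symmDiff (P i.castSucc) (P i.succ)) :
    (∀ i : Fin n, IsSquareIn Pols (P i.castSucc) (P i.succ)
      ((P i.succ).erase α) ((P i.castSucc).erase α)) ∧
    Relation.EqvGen (OppEdges Pols)
      (P 0, (P 0).erase α) (P (Fin.last n), (P (Fin.last n)).erase α) := by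
  have hsq : ∀ i : Fin n, IsSquareIn Pols (P i.castSucc) (P i.succ)
      ((P i.succ).erase α) ((P i.castSucc).erase α) := by
    intro i
    set a := P i.castSucc
    set b := P i.succ
    have hab : (symmDiff a b).card = 1 := hadj i
    have hcd : symmDiff (b.erase α) (a.erase α) = symmDiff b a := by
      rw [symmDiff_erase_erase, Finset.erase_eq_of_notMem]
      rw [symmDiff_comm]
      exact hnotα i
    have hcd1 : (symmDiff (b.erase α) (a.erase α)).card = 1 := by
      rw [hcd, symmDiff_comm]; exact hab
    have hne_ab : a ≠ b := by
      intro h; rw [h, symmDiff_self] at hab; simp at hab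
    have hαnot : ∀ s : Finset A, α ∉ s.erase α := fun s => Finset.notMem_erase α s
    refine ⟨hmem _, hmem _, hrem _, hrem _, hne_ab, ?_, ?_, ?_, ?_, ?_, hab, ?_, hcd1, ?_⟩
    · intro h; exact hαnot b (h ▸ hα i.castSucc)
    · intro h; exact hαnot a (h ▸ hα i.castSucc)
    · intro h; exact hαnot b (h ▸ hα i.succ)
    · intro h; exact hαnot a (h ▸ hα i.succ)
    · intro h; rw [h] at hcd
      rw [symmDiff_self] at hcd
      rw [symmDiff_comm, ← hcd] at hab
      simp at hab
    · rw [symmDiff_erase_self (hα i.succ)]; simp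
    · rw [symmDiff_comm, symmDiff_erase_self (hα i.castSucc)]; simp
  refine ⟨hsq, ?_⟩
  have key : ∀ k : ℕ, ∀ hk : k ≤ n,
      Relation.EqvGen (OppEdges Pols)
        (P 0, (P 0).erase α) (P ⟨k, Nat.lt_succ_of_le hk⟩, (P ⟨k, Nat.lt_succ_of_le hk⟩).erase α) := by
    intro k
    induction k with
    | zero => intro _; exact Relation.EqvGen.refl _
    | succ m ih =>
      intro hk
      have hm : m ≤ n := Nat.le_of_succ_le hk
      have hmn : m < n := hk
      have step : Relation.EqvGen (OppEdges Pols)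
          (P ⟨m, Nat.lt_succ_of_le hm⟩, (P ⟨m, Nat.lt_succ_of_le hm⟩).erase α)
          (P ⟨m + 1, Nat.lt_succ_of_le hk⟩, (P ⟨m + 1, Nat.lt_succ_of_le hk⟩).erase α) := by
        apply Relation.EqvGen.rel
        refine ⟨P (⟨m, hmn⟩ : Fin n).castSucc, P (⟨m, hmn⟩ : Fin n).succ,
          ((P (⟨m, hmn⟩ : Fin n).succ).erase α), ((P (⟨m, hmn⟩ : Fin n).castSucc).erase α),
          hsq ⟨m, hmn⟩, rfl, rfl⟩
      exact Relation.EqvGen.trans _ _ _ (ih hm) step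
  have := key n le_rfl
  simpa [Fin.last] using this
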